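/- Let G be an infinite group with a finite generating set S. Then every element x ∈ G has retreat depth rd(x) ≤ ⌊|x|/2⌋. Consequently, for every n, |S(2n)| ≤ |S(n)^∞| · |S(n)| and |S(2n+1)| ≤ |S(n+1)^∞| · |S(n)|. -/

import Mathlib

/-! ### Cayley graphs, word metric, spheres, annuli -/

/-- The Cayley graph of a group with respect to a set `S` of generators
(symmetrized, without loops). -/
def cayley (G : Type*) [Group G] (S : Set G) : SimpleGraph G where
  Adj g h := g ≠ h ∧ (g⁻¹ * h ∈ S ∨ h⁻¹ * g ∈ S)
  symm := by
    constructor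
    rintro g h ⟨hne, hs⟩
    exact ⟨hne.symm, hs.symm⟩
  loopless := by
    constructor
    rintro g ⟨hne, -⟩
    exact hne rfl

variable {G : Type*} [Group G]

/-- The word length of `g`, i.e. the distance from the identity to `g` in the Cayley graph. -/
noncomputable def wlen (S : Set G) (g : G) : ℕ :=
  (cayley G S).dist 1 g

/-- The ball of radius `n`. -/
def wBall (S : Set G) (n : ℕ) : Set G := {g | wlen S g ≤ n}

/-- The sphere of radius `n`. -/
def wSphere (S : Set G) (n : ℕ) : Set G := {g | wlen S g = n}

/-- The annulus of radius `n` and thickness `r`, i.e. `B(n+r) \ B(n-1)`. -/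
def wAnnulus (S : Set G) (n r : ℕ) : Set G := {g | n ≤ wlen S g ∧ wlen S g ≤ n + r}

/-- The part of `A` lying in infinite connected components of the subgraph of the
Cayley graph induced on `A`.  When the infinite component is unique (one-ended case)
this is exactly the infinite component of `A`. -/
def infPart (S : Set G) (A : Set G) : Set G :=
  {g | ∃ hg : g ∈ A, {w : ↥A | ((cayley G S).induce A).Reachable ⟨g, hg⟩ w}.Infinite}

/-- `S(n,r)^∞ = B(n+r) ∩ B(n-1)^{c,∞}`: the elements of the annulus connected to infinity. -/
def sphereInf (S : Set G) (n r : ℕ) : Set G :=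
  wAnnulus S n r ∩ infPart S {g | n ≤ wlen S g}

/-- The graph `S(n,r)^∞` is connected. -/
def SpheresConn (S : Set G) (n r : ℕ) : Prop :=
  ((cayley G S).induce (sphereInf S n r)).Connected

/-- The connection thickness `th_{G,S}(n)`: the least `r` such that `S(n,r)^∞` is connected. -/
noncomputable def connThickness (S : Set G) (n : ℕ) : ℕ :=
  sInf {r | SpheresConn S n r}

/-- The retreat depth of `g`: the least `d ≥ 0` such that `g` belongs to an infinite
component of the complement of `B(|g|-d-1)`. -/
noncomputable def retreatDepth (S : Set G) (g : G) : ℕ :=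
  sInf {d | g ∈ infPart S {x | wlen S g ≤ wlen S x + d}}

/-- `rd(G,S) = sup_g rd(g)`, as an extended natural number. -/
noncomputable def rdSup (S : Set G) : ℕ∞ :=
  ⨆ g : G, (retreatDepth S g : ℕ∞)

/-- `g` is a dead-end: no neighbour of `g` is further away from the identity. -/
def IsDeadEnd (S : Set G) (g : G) : Prop :=
  ∀ h : G, (cayley G S).Adj g h → wlen S h ≤ wlen S g

/-- `x` and `y` are connected by a path staying inside `A`. -/
def connectedIn (S : Set G) (A : Set G) (x y : G) : Prop :=
  ∃ w : (cayley G S).Walk x y, ∀ v ∈ w.support, v ∈ A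

/-- The travelling salesman distance from `x` to `y` through `A`: the length of the
shortest walk from `x` to `y` visiting every vertex of `A`. -/
noncomputable def tsDist {V : Type*} (H : SimpleGraph V) (x : V) (A : Set V) (y : V) : ℕ :=
  sInf {n | ∃ w : H.Walk x y, w.length = n ∧ ∀ a ∈ A, a ∈ w.support}

/-! ### Entropy of partitions -/

/-- Shannon entropy of the partition of the finite set `A` into blocks `P x` (the block
of `x ∈ A`), with respect to the uniform measure:
`H(Π) = -∑_{π ∈ Π} μ(π) log μ(π) = -(1/|A|) ∑_{x ∈ A} log (|P x|/|A|)`. -/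
noncomputable def partitionEntropy (A : Set G) (P : G → Set G) : ℝ :=
  -(1 / (Nat.card ↥A : ℝ)) * ∑ᶠ x ∈ A, Real.log ((Nat.card ↥(P x) : ℝ) / (Nat.card ↥A : ℝ))

/-- Normalised entropy `h(Π) = H(Π)/log |Π|`, where `|Π|` is the number of blocks. -/
noncomputable def normalizedEntropy (A : Set G) (P : G → Set G) : ℝ :=
  partitionEntropy A P / Real.log (Nat.card ↥(P '' A))

/-- The block of `x` in the partition `Π(n,r)` of `S(n)`: elements of `S(n)` joined
to `x` by a path inside the annulus `S(n,r)`. -/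
def piBlock (S : Set G) (n r : ℕ) (x : G) : Set G :=
  {y | y ∈ wSphere S n ∧ connectedIn S (wAnnulus S n r) x y}

/-- The block of `x` in the partition `Π(n,r)^∞` of `S(n)^∞`: elements of `S(n)^∞`
joined to `x` by a path inside `S(n,r)^∞`. -/
def piBlockInf (S : Set G) (n r : ℕ) (x : G) : Set G :=
  {y | y ∈ sphereInf S n 0 ∧ connectedIn S (sphereInf S n r) x y}

/-! ### Wreath products -/

/-- Finitely supported functions `Γ → L`, as a subgroup of the product group. -/
def LampGroup (Γ L : Type*) [Group Γ] [Group L] : Subgroup (Γ → L) where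
  carrier := {f | (Function.mulSupport f).Finite}
  one_mem' := by
    refine Set.Finite.subset Set.finite_empty fun x hx => ?_
    exact hx rfl
  mul_mem' := by
    intro a b ha hb
    exact (Set.Finite.union ha hb).subset (Function.mulSupport_mul a b)
  inv_mem' := by
    intro a ha
    refine ha.subset fun x hx => ?_
    simp only [Function.mem_mulSupport, Pi.inv_apply, ne_eq, inv_eq_one] at hx
    exact hx

variable (Γ L : Type*) [Group Γ] [Group L]

/-- Translation action of `Γ` on finitely supported lamp configurations. -/
noncomputable def shiftAut (γ : Γ) : ↥(LampGroup Γ L) ≃* ↥(LampGroup Γ L) where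
  toFun f := ⟨fun x => (f : Γ → L) (γ⁻¹ * x), by
    show (Function.mulSupport fun x => (f : Γ → L) (γ⁻¹ * x)).Finite
    exact Set.Finite.preimage ((mul_right_injective γ⁻¹).injOn) f.2⟩
  invFun f := ⟨fun x => (f : Γ → L) (γ * x), by
    show (Function.mulSupport fun x => (f : Γ → L) (γ * x)).Finite
    exact Set.Finite.preimage ((mul_right_injective γ).injOn) f.2⟩
  left_inv := by
    intro f
    apply Subtype.ext
    funext x
    simp
  right_inv := by
    intro f
    apply Subtype.ext
    funext x
    simp
  map_mul' := by
    intro f g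
    apply Subtype.ext
    rfl

/-- The action homomorphism `Γ →* Aut(⊕_Γ L)`. -/
noncomputable def shiftHom : Γ →* MulAut ↥(LampGroup Γ L) where
  toFun := shiftAut Γ L
  map_one' := by
    apply MulEquiv.ext
    intro f
    apply Subtype.ext
    funext x
    simp [shiftAut]
  map_mul' := by
    intro a b
    apply MulEquiv.ext
    intro f
    apply Subtype.ext
    funext x
    simp [shiftAut, mul_assoc]

/-- The (restricted) wreath product `Γ ≀ L = Γ ⋉ (⊕_Γ L)`. -/
abbrev Wreath := ↥(LampGroup Γ L) ⋊[shiftHom Γ L] Γ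

open Classical in
/-- The element `(e_Γ, δ_l)` of the wreath product: lamp `l` at the identity. -/
noncomputable def lampElt (l : L) : Wreath Γ L :=
  ⟨⟨fun x => if x = (1 : Γ) then l else 1, by
    refine Set.Finite.subset (Set.finite_singleton (1 : Γ)) fun x hx => ?_
    rcases eq_or_ne x 1 with h | h
    · simp [h]
    · exact absurd (if_neg h) hx⟩, 1⟩

/-- The element `(γ, Id)` of the wreath product. -/
def baseElt (γ : Γ) : Wreath Γ L := ⟨1, γ⟩

/-- The "switch-walk-switch" generating set `L S_Γ L`. -/
noncomputable def swsw (SΓ : Set Γ) : Set (Wreath Γ L) :=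
  {g | ∃ l l' : L, ∃ s ∈ SΓ, g = lampElt Γ L l * baseElt Γ L s * lampElt Γ L l'}

/-- The "switch or walk" generating set `S_Γ ∪ S_L`. -/
noncomputable def walkOrSwitch (SΓ : Set Γ) (SL : Set L) : Set (Wreath Γ L) :=
  (baseElt Γ L '' SΓ) ∪ (lampElt Γ L '' SL)

/-- `ℤ` written multiplicatively. -/
abbrev MZ := Multiplicative ℤ

/-- The generating set `{±1}` of `ℤ`. -/
def genZ : Set MZ := {Multiplicative.ofAdd 1, Multiplicative.ofAdd (-1)}

/-- The ladder `ℤ × ℤ/2ℤ` written multiplicatively. -/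
abbrev Ladder := Multiplicative (ℤ × ZMod 2)

/-- The generating set `{(±1,0), (0,1)}` of the ladder. -/
def genLadder : Set Ladder :=
  {Multiplicative.ofAdd (1, 0), Multiplicative.ofAdd (-1, 0), Multiplicative.ofAdd (0, 1)}

/-- The set of vertices of the minimal subtree of a tree containing a set `X`:
all vertices lying on a geodesic between two points of `X`. -/
def treeHull {V : Type*} (H : SimpleGraph V) (X : Set V) : Set V :=
  {v | ∃ x ∈ X, ∃ y ∈ X, H.dist x v + H.dist v y = H.dist x y}


section StmtAux
variable {G : Type*} [Group G]

section aux
variable (S : Set G)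

/-- Left translation as a graph homomorphism of the Cayley graph. -/
def cayleyMulLeft (a : G) : cayley G S →g cayley G S where
  toFun g := a * g
  map_rel' := by
    rintro g h ⟨hne, hs⟩
    refine ⟨by simpa using hne, ?_⟩
    simpa [mul_assoc] using hs

lemma cayley_reach_mul_left (a : G) {u v : G} (h : (cayley G S).Reachable u v) :
    (cayley G S).Reachable (a * u) (a * v) :=
  h.map (cayleyMulLeft S a)

lemma cayley_dist_mul_left (a u v : G) :
    (cayley G S).dist (a * u) (a * v) = (cayley G S).dist u v := by
  have key : ∀ (b x y : G), (cayley G S).dist (b * x) (b * y) ≤ (cayley G S).dist x y := by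
    intro b x y
    rcases le_or_gt ((cayley G S).dist (b * x) (b * y)) ((cayley G S).dist x y) with h | h
    · exact h
    · by_cases hr : (cayley G S).Reachable x y
      · obtain ⟨w, hw⟩ := hr.exists_walk_length_eq_dist
        have := (cayley G S).dist_le (w.map (cayleyMulLeft S b))
        simp [hw] at this; exact this
      · have hr' : ¬ (cayley G S).Reachable (b * x) (b * y) := fun hr' => by
          have := cayley_reach_mul_left S b⁻¹ hr'
          simp only [inv_mul_cancel_left] at this
          exact hr this
        have : (cayley G S).dist (b * x) (b * y) = 0 := by
          simp [SimpleGraph.dist_eq_zero_iff_eq_or_not_reachable, hr']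
        omega
  refine le_antisymm (key a u v) ?_
  have := key a⁻¹ (a * u) (a * v)
  simpa using this

variable (hgen : Subgroup.closure S = ⊤)
include hgen

lemma cayley_reachable_one (g : G) : (cayley G S).Reachable 1 g := by
  let K : Subgroup G :=
    { carrier := {g | (cayley G S).Reachable 1 g}
      one_mem' := SimpleGraph.Reachable.refl 1
      mul_mem' := by
        intro a b ha hb
        exact ha.trans (by simpa using cayley_reach_mul_left S a hb)
      inv_mem' := by
        intro a ha
        have := cayley_reach_mul_left S a⁻¹ ha
        simpa using this.symm }
  have hS : S ⊆ K := by
    intro s hs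
    by_cases h1 : s = 1
    · simp [h1, K]
    · exact SimpleGraph.Adj.reachable ⟨fun h => h1 h.symm, Or.inl (by simpa using hs)⟩
  have : (⊤ : Subgroup G) ≤ K := hgen ▸ Subgroup.closure_le K |>.mpr hS
  exact this (Subgroup.mem_top g)

lemma cayley_connected [Nonempty G] : (cayley G S).Connected := by
  refine ⟨fun u v => ?_⟩
  exact (cayley_reachable_one S hgen u).symm.trans (cayley_reachable_one S hgen v)

end aux

section aux2
variable (S : Set G)

lemma cayley_conn (hgen : Subgroup.closure S = ⊤) : (cayley G S).Connected :=
  cayley_connected S hgen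

lemma dist_eq_wlen (x y : G) : (cayley G S).dist x y = wlen S (x⁻¹ * y) := by
  have := cayley_dist_mul_left S x⁻¹ x y
  simpa [wlen] using this.symm

lemma wlen_one : wlen S (1 : G) = 0 := by simp [wlen]

lemma wlen_inv (g : G) : wlen S g⁻¹ = wlen S g := by
  have := cayley_dist_mul_left S g 1 g⁻¹
  simp only [mul_one, mul_inv_cancel] at this
  rw [wlen, ← this, SimpleGraph.dist_comm]; rfl

lemma wlen_mul_le (hgen : Subgroup.closure S = ⊤) (a b : G) : wlen S (a * b) ≤ wlen S a + wlen S b := by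
  have ht := (cayley_conn S hgen).dist_triangle (u := 1) (v := a) (w := a * b)
  have := cayley_dist_mul_left S a 1 b
  simp only [mul_one] at this
  rw [wlen, wlen, wlen]
  omega

lemma wlen_le_of_dist (hgen : Subgroup.closure S = ⊤) (x y : G) : wlen S x ≤ wlen S y + (cayley G S).dist y x := by
  have := (cayley_conn S hgen).dist_triangle (u := 1) (v := y) (w := x)
  rw [wlen, wlen]
  omega

end aux2

section aux3
variable (S : Set G)

open SimpleGraph

/-- L1: distances to a support vertex sum to at most the walk length. -/
lemma walk_support_dist (hgen : Subgroup.closure S = ⊤) {x y : G}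
    (w : (cayley G S).Walk x y) :
    ∀ v ∈ w.support, (cayley G S).dist x v + (cayley G S).dist v y ≤ w.length := by
  induction w with
  | nil =>
    intro v hv
    simp only [Walk.support_nil, List.mem_singleton] at hv
    subst hv
    simp
  | @cons u u' y h p ih =>
    intro v hv
    rw [Walk.support_cons, List.mem_cons] at hv
    rcases hv with rfl | hv
    · have := (cayley G S).dist_le (Walk.cons h p)
      simp only [SimpleGraph.dist_self, Walk.length_cons] at *
      omega
    · have h1 := ih v hv
      have h2 := (cayley_conn S hgen).dist_triangle (u := u) (v := u') (w := v)
      have h3 : (cayley G S).dist u u' ≤ 1 := by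
        simpa using (cayley G S).dist_le h.toWalk
      simp only [Walk.length_cons]
      omega

/-- L2': extracting a terminal subwalk. -/
lemma walk_suffix (hgen : Subgroup.closure S = ⊤) {u x : G} (w : (cayley G S).Walk u x) :
    ∀ j ≤ w.length, ∃ (a : G) (w' : (cayley G S).Walk a x),
      w'.length + j = w.length ∧ (cayley G S).dist u a ≤ j ∧
      ∀ v ∈ w'.support, v ∈ w.support := by
  induction w with
  | nil =>
    intro j hj
    simp only [Walk.length_nil, Nat.le_zero] at hj
    subst hj
    exact ⟨_, Walk.nil, by simp, by simp, fun v hv => hv⟩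
  | @cons u u' y h p ih =>
    intro j hj
    match j with
    | 0 =>
      exact ⟨_, Walk.cons h p, by simp, by simp, fun v hv => hv⟩
    | j' + 1 =>
      obtain ⟨a, w', hl, hd, hs⟩ := ih j' (by simpa [Walk.length_cons] using hj)
      refine ⟨a, w', by simp [Walk.length_cons]; omega, ?_, ?_⟩
      · have h2 := (cayley_conn S hgen).dist_triangle (u := u) (v := u') (w := a)
        have h3 : (cayley G S).dist u u' ≤ 1 := by
          simpa using (cayley G S).dist_le h.toWalk
        omega
      · intro v hv
        rw [Walk.support_cons, List.mem_cons]
        exact Or.inr (hs v hv)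

/-- A walk with support inside `A` gives reachability in the induced graph. -/
lemma reach_induce {A : Set G} {u v : G} (w : (cayley G S).Walk u v)
    (hw : ∀ z ∈ w.support, z ∈ A) (hu : u ∈ A) (hv : v ∈ A) :
    ((cayley G S).induce A).Reachable ⟨u, hu⟩ ⟨v, hv⟩ := by
  induction w with
  | nil => rfl
  | @cons a b c h p ih =>
    have hb : b ∈ A := hw b (by simp [Walk.support_cons])
    have step : ((cayley G S).induce A).Adj ⟨a, hu⟩ ⟨b, hb⟩ := by
      simpa [SimpleGraph.comap_adj] using h
    exact (step.reachable).trans (ih (fun z hz => hw z (by simp [Walk.support_cons, hz])) hb hv)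

end aux3

section aux4
variable (S : Set G)
open SimpleGraph

lemma ball_finite (hSfin : S.Finite) (hgen : Subgroup.closure S = ⊤) (n : ℕ) :
    {g : G | wlen S g ≤ n}.Finite := by
  induction n with
  | zero =>
    refine Set.Finite.subset (Set.finite_singleton 1) ?_
    intro g hg
    simp only [Set.mem_setOf_eq, Nat.le_zero] at hg
    have h0 : (cayley G S).dist 1 g = 0 := hg
    have : (1 : G) = g := ((cayley_conn S hgen).dist_eq_zero_iff).mp h0
    simp [← this]
  | succ n ih =>
    have hT : (S ∪ S⁻¹).Finite := hSfin.union hSfin.inv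
    refine Set.Finite.subset (ih.union (((ih.prod hT).image (fun p : G × G => p.1 * p.2)))) ?_
    intro g hg
    simp only [Set.mem_setOf_eq] at hg
    rcases le_or_gt (wlen S g) n with h | h
    · exact Or.inl h
    · have hw0 : wlen S g = (cayley G S).dist 1 g := rfl
      have hlen : (cayley G S).dist g 1 = n + 1 := by
        rw [SimpleGraph.dist_comm]; omega
      obtain ⟨w, hw⟩ := ((cayley_conn S hgen).exists_walk_length_eq_dist g 1)
      right
      cases w with
      | nil => rw [hlen] at hw; simp at hw
      | @cons _ u _ hadj p =>
        refine ⟨⟨u, u⁻¹ * g⟩, ⟨?_, ?_⟩, by simp⟩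
        · have h5 := (cayley G S).dist_le p
          have hp : p.length = n := by
            rw [hlen] at hw
            simpa using hw
          have h6 : (cayley G S).dist u 1 ≤ n := by omega
          simpa [wlen, SimpleGraph.dist_comm] using h6
        · rcases hadj.2 with hs | hs
          · exact Or.inr (by simpa using hs)
          · exact Or.inl (by simpa using hs)

lemma wlen_unbounded [Infinite G] (hSfin : S.Finite) (hgen : Subgroup.closure S = ⊤)
    (M : ℕ) : ∃ y : G, M < wlen S y := by
  by_contra h
  push_neg at h
  have : (Set.univ : Set G).Finite :=
    (ball_finite S hSfin hgen M).subset (fun g _ => h g)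
  exact Set.infinite_univ this
end aux4

section aux5
variable (S : Set G)

lemma exists_far [Infinite G] (hSfin : S.Finite) (hgen : Subgroup.closure S = ⊤)
    (x : G) (M : ℕ) :
    ∃ y : G, M < wlen S y ∧ (cayley G S).dist x y ≤ wlen S y := by
  by_contra hc
  push_neg at hc
  obtain ⟨y₀, hy₀⟩ := wlen_unbounded S hSfin hgen M
  have key : ∀ y, M < wlen S y → wlen S y < wlen S (x⁻¹ * y) := by
    intro y hy
    have h := hc y hy
    rwa [dist_eq_wlen S] at h
  have hstep : ∀ j : ℕ, M + 1 + j ≤ wlen S (x⁻¹ ^ j * y₀) := by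
    intro j
    induction j with
    | zero => simpa using hy₀
    | succ j ih =>
      have h2 := key _ (by omega : M < wlen S (x⁻¹ ^ j * y₀))
      have h3 : x⁻¹ * (x⁻¹ ^ j * y₀) = x⁻¹ ^ (j + 1) * y₀ := by
        rw [pow_succ', mul_assoc]
      rw [h3] at h2
      omega
  set J := wlen S y₀ with hJ
  have h4 := hstep J
  have h5 : wlen S (x⁻¹ ^ J * y₀) ≤ wlen S (x⁻¹ ^ J) + J := wlen_mul_le S hgen _ _
  have h6 : wlen S (x⁻¹ ^ J) = wlen S (x ^ J) := by
    rw [inv_pow]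
    exact wlen_inv S _
  have hdesc : ∀ j : ℕ, ¬ (M < wlen S (x ^ j)) := by
    intro j
    induction j using Nat.strong_induction_on with
    | _ j ih =>
      intro hj
      match j, hj with
      | 0, hj => simp [wlen_one] at hj
      | i + 1, hj =>
        have h7 := key _ hj
        have h8 : x⁻¹ * x ^ (i + 1) = x ^ i := by
          rw [pow_succ']
          exact inv_mul_cancel_left _ _
        rw [h8] at h7
        exact ih i (by omega) (by omega)
  exact hdesc J (by omega)
end aux5


section aux6
variable (S : Set G)

lemma mem_infPart [Infinite G] (hSfin : S.Finite) (hgen : Subgroup.closure S = ⊤)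
    (x : G) (k : ℕ) (hk : 2 * k ≤ wlen S x + 1) :
    x ∈ infPart S {g | k ≤ wlen S g} := by
  have hx : x ∈ {g : G | k ≤ wlen S g} := by
    simp only [Set.mem_setOf_eq]; omega
  refine ⟨hx, ?_⟩
  have claim : ∀ M : ℕ, ∃ p : ↥{g : G | k ≤ wlen S g},
      ((cayley G S).induce {g | k ≤ wlen S g}).Reachable ⟨x, hx⟩ p ∧ M < wlen S p.val := by
    intro M
    obtain ⟨y, hy1, hy2⟩ := exists_far S hSfin hgen x M
    obtain ⟨w, hw⟩ :=
      ((cayley_conn S hgen).preconnected x y).exists_walk_length_eq_dist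
    have hsup : ∀ v ∈ w.support, v ∈ {g : G | k ≤ wlen S g} := by
      intro v hv
      have h1 := walk_support_dist S hgen w v hv
      have h2 := wlen_le_of_dist S hgen x v
      have h3 := wlen_le_of_dist S hgen y v
      have h4 : (cayley G S).dist v x = (cayley G S).dist x v := SimpleGraph.dist_comm
      have h5 : (cayley G S).dist v y = (cayley G S).dist y v := SimpleGraph.dist_comm
      simp only [Set.mem_setOf_eq]
      omega
    have hy : y ∈ {g : G | k ≤ wlen S g} := hsup y w.end_mem_support
    exact ⟨⟨y, hy⟩, reach_induce S w hsup hx hy, hy1⟩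
  by_contra hfin
  rw [Set.not_infinite] at hfin
  obtain ⟨B, hB⟩ := (hfin.image (fun p => wlen S p.val)).bddAbove
  obtain ⟨p, hp, hgt⟩ := claim B
  have : wlen S p.val ≤ B := hB (Set.mem_image_of_mem _ hp)
  omega
end aux6

section aux7
variable (S : Set G)

lemma part1 [Infinite G] (hSfin : S.Finite) (hgen : Subgroup.closure S = ⊤) (x : G) :
    retreatDepth S x ≤ wlen S x / 2 := by
  apply Nat.sInf_le
  have hset : {x' : G | wlen S x ≤ wlen S x' + wlen S x / 2}
      = {g : G | (wlen S x - wlen S x / 2) ≤ wlen S g} := Set.ext fun g => by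
    simp only [Set.mem_setOf_eq]
    omega
  show x ∈ infPart S _
  rw [hset]
  exact mem_infPart S hSfin hgen x _ (by omega)

lemma wlen_split (hgen : Subgroup.closure S = ⊤) (x : G) (k : ℕ) (hkx : k ≤ wlen S x) :
    ∃ a : G, wlen S a = k ∧ wlen S (a⁻¹ * x) = wlen S x - k ∧
      ∃ w : (cayley G S).Walk a x, ∀ v ∈ w.support, k ≤ wlen S v := by
  have hww : wlen S x = (cayley G S).dist 1 x := rfl
  obtain ⟨w, hw⟩ := ((cayley_conn S hgen).preconnected 1 x).exists_walk_length_eq_dist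
  obtain ⟨a, w', hl, hd, hs⟩ := walk_suffix S hgen w k (by omega)
  have hda : wlen S a = (cayley G S).dist 1 a := rfl
  have h1 := wlen_le_of_dist S hgen x a
  have h2 := (cayley G S).dist_le w'
  have hka : wlen S a = k := by omega
  have hdx : (cayley G S).dist a x = wlen S x - k := by omega
  refine ⟨a, hka, ?_, w', ?_⟩
  · rw [← dist_eq_wlen S, hdx]
  · intro v hv
    have h3 := walk_support_dist S hgen w' v hv
    have h4 := wlen_le_of_dist S hgen x v
    omega

lemma exists_decomp [Infinite G] (hSfin : S.Finite) (hgen : Subgroup.closure S = ⊤)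
    (x : G) (k : ℕ) (hk1 : k ≤ wlen S x) (hk2 : 2 * k ≤ wlen S x + 1) :
    ∃ a b : G, a ∈ sphereInf S k 0 ∧ wlen S b = wlen S x - k ∧ x = a * b := by
  obtain ⟨a, ha, hb, w', hsup⟩ := wlen_split S hgen x k hk1
  have hxmem := mem_infPart S hSfin hgen x k hk2
  obtain ⟨hx', hinf⟩ := hxmem
  have haA : a ∈ {g : G | k ≤ wlen S g} := by
    simp only [Set.mem_setOf_eq]; omega
  have hreach : ((cayley G S).induce {g : G | k ≤ wlen S g}).Reachable ⟨a, haA⟩ ⟨x, hx'⟩ :=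
    reach_induce S w' (fun v hv => hsup v hv) haA hx'
  refine ⟨a, a⁻¹ * x, ⟨⟨by omega, by omega⟩, haA, ?_⟩, hb, (mul_inv_cancel_left a x).symm⟩
  exact hinf.mono (fun p hp => hreach.trans hp)

lemma count [Infinite G] (hSfin : S.Finite) (hgen : Subgroup.closure S = ⊤)
    (m k : ℕ) (hk1 : k ≤ m) (hk2 : 2 * k ≤ m + 1) :
    Nat.card ↥(wSphere S m) ≤
      Nat.card ↥(sphereInf S k 0) * Nat.card ↥(wSphere S (m - k)) := by
  have hfin1 : (sphereInf S k 0).Finite := by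
    refine (ball_finite S hSfin hgen k).subset ?_
    rintro g ⟨⟨-, h2⟩, -⟩
    simpa using h2
  have hfin2 : (wSphere S (m - k)).Finite := by
    refine (ball_finite S hSfin hgen (m - k)).subset ?_
    intro g hg
    exact le_of_eq hg
  have := hfin1.to_subtype
  have := hfin2.to_subtype
  rw [← Nat.card_prod]
  have hdec : ∀ x : ↥(wSphere S m),
      ∃ p : ↥(sphereInf S k 0) × ↥(wSphere S (m - k)), x.val = p.1.val * p.2.val := by
    intro x
    have hx : wlen S x.val = m := x.2
    obtain ⟨a, b, ha, hb, hab⟩ :=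
      exists_decomp S hSfin hgen x.val k (by omega) (by omega)
    exact ⟨(⟨a, ha⟩, ⟨b, by simp only [wSphere, Set.mem_setOf_eq]; omega⟩), hab⟩
  choose f hf using hdec
  refine Nat.card_le_card_of_injective f ?_
  intro x y hxy
  apply Subtype.ext
  rw [hf x, hf y, hxy]

end aux7

end StmtAux

/-- In any infinite group with finite generating set, every element `x` has
retreat depth at most `⌊|x|/2⌋`; consequently `|S(2n)| ≤ |S(n)^∞|·|S(n)|` and
`|S(2n+1)| ≤ |S(n+1)^∞|·|S(n)|`. -/
theorem stmt_19 {G : Type*} [Group G] [Infinite G] (S : Set G) (hSfin : S.Finite)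
    (hgen : Subgroup.closure S = ⊤) :
    (∀ x : G, retreatDepth S x ≤ wlen S x / 2) ∧
    ∀ n : ℕ,
      Nat.card ↥(wSphere S (2 * n)) ≤
        Nat.card ↥(sphereInf S n 0) * Nat.card ↥(wSphere S n) ∧
      Nat.card ↥(wSphere S (2 * n + 1)) ≤
        Nat.card ↥(sphereInf S (n + 1) 0) * Nat.card ↥(wSphere S n) :=  by
  refine ⟨fun x => part1 S hSfin hgen x, fun n => ⟨?_, ?_⟩⟩
  · have h := count S hSfin hgen (2 * n) n (by omega) (by omega)
    have e : 2 * n - n = n := by omega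
    rwa [e] at h
  · have h := count S hSfin hgen (2 * n + 1) (n + 1) (by omega) (by omega)
    have e : 2 * n + 1 - (n + 1) = n := by omega
    rwa [e] at h
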